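/- Let (x₂,x₃) ∈ ℝ² with (x₂,x₃) ≠ (0,0), let a < b be real numbers, and let θ : ℝ → ℝ be continuous. If x₂ cos θ(t) − x₃ sin θ(t) > 0 for every t ∈ (a,b), then |θ(b) − θ(a)| ≤ π. (This is the key geometric observation (relation): on the way along a connected component of a slice of a tube whose cross-section lies in the half-plane {y₂>0}, the rotation angle changes by at most π.) -/

import Mathlib

open Real Set

lemma angle_core (g : ℝ → ℝ) (hg : Continuous g) (a b : ℝ) (hab : a < b)
    (h : ∀ t ∈ Set.Ioo a b, 0 < Real.cos (g t)) : |g b - g a| ≤ π := by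
  have hπ := Real.pi_pos
  set t₀ : ℝ := (a + b) / 2 with ht₀def
  have ht₀ : t₀ ∈ Set.Ioo a b := ⟨by simp only [ht₀def]; linarith, by simp only [ht₀def]; linarith⟩
  set n : ℤ := round (g t₀ / (2 * π)) with hn_def
  have hn : |g t₀ - 2 * π * n| < π / 2 := by
    have h1 : |g t₀ / (2 * π) - n| ≤ 1 / 2 := abs_sub_round _
    have h2 : |g t₀ - 2 * π * n| ≤ π := by
      have heq : g t₀ - 2 * π * n = (2 * π) * (g t₀ / (2 * π) - n) := by
        field_simp
      rw [heq, abs_mul, abs_of_pos (by positivity : (0:ℝ) < 2 * π)]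
      nlinarith
    by_contra hc
    push_neg at hc
    have hle : Real.cos (g t₀ - 2 * π * n) ≤ 0 := by
      rw [← Real.cos_abs]
      exact Real.cos_nonpos_of_pi_div_two_le_of_le hc (by linarith)
    have hcos : Real.cos (g t₀ - 2 * π * n) = Real.cos (g t₀) := by
      rw [show g t₀ - 2 * π * n = g t₀ + ((-n : ℤ) : ℝ) * (2 * π) by push_cast; ring]
      exact Real.cos_add_int_mul_two_pi _ _
    have := h t₀ ht₀
    linarith [hcos ▸ hle]
  have key : ∀ t ∈ Set.Ioo a b, g t ∈ Set.Icc (2 * π * n - π / 2) (2 * π * n + π / 2) := by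
    intro t ht
    have hsub : Set.uIcc t₀ t ⊆ Set.Ioo a b :=
      (Set.ordConnected_Ioo).uIcc_subset ht₀ ht
    have hlo : 2 * π * n - π / 2 < g t₀ := by
      have := abs_lt.mp hn
      linarith [this.1]
    have hhi : g t₀ < 2 * π * n + π / 2 := by
      have := abs_lt.mp hn
      linarith [this.2]
    by_contra hc
    simp only [Set.mem_Icc, not_and_or, not_le] at hc
    obtain hc | hc := hc
    · have hmem : 2 * π * n - π / 2 ∈ Set.uIcc (g t₀) (g t) := by
        rw [Set.mem_uIcc]
        right
        exact ⟨hc.le, hlo.le⟩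
      obtain ⟨s, hs, hgs⟩ := intermediate_value_uIcc (hg.continuousOn) hmem
      have hspos := h s (hsub hs)
      rw [hgs] at hspos
      have : Real.cos (2 * π * n - π / 2) = 0 := by
        rw [show (2 * π * (n:ℝ) - π / 2) = -(π/2) + n * (2 * π) by ring,
          Real.cos_add_int_mul_two_pi, Real.cos_neg, Real.cos_pi_div_two]
      linarith
    · have hmem : 2 * π * n + π / 2 ∈ Set.uIcc (g t₀) (g t) := by
        rw [Set.mem_uIcc]
        left
        exact ⟨hhi.le, hc.le⟩
      obtain ⟨s, hs, hgs⟩ := intermediate_value_uIcc (hg.continuousOn) hmem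
      have hspos := h s (hsub hs)
      rw [hgs] at hspos
      have : Real.cos (2 * π * n + π / 2) = 0 := by
        rw [show (2 * π * (n:ℝ) + π / 2) = π/2 + n * (2 * π) by ring,
          Real.cos_add_int_mul_two_pi, Real.cos_pi_div_two]
      linarith
  have endpoint : ∀ c : ℝ, c ∈ Set.Icc a b →
      g c ∈ Set.Icc (2 * π * n - π / 2) (2 * π * n + π / 2) := by
    intro c hc
    have hcl : c ∈ closure (Set.Ioo a b) := by
      rw [closure_Ioo hab.ne]
      exact hc
    have hne : (nhdsWithin c (Set.Ioo a b)).NeBot :=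
      mem_closure_iff_nhdsWithin_neBot.mp hcl
    exact isClosed_Icc.mem_of_tendsto
      ((hg.tendsto c).mono_left nhdsWithin_le_nhds)
      (eventually_mem_nhdsWithin.mono (fun t ht => key t ht))
  have ha' := endpoint a ⟨le_refl a, hab.le⟩
  have hb' := endpoint b ⟨hab.le, le_refl b⟩
  rw [abs_sub_le_iff]
  constructor <;> [linarith [hb'.2, ha'.1]; linarith [ha'.2, hb'.1]]

/-- If a nonzero point `(x₂,x₃)` rotated by the angle `−θ(t)` lies in the open half-plane
`{y₂ > 0}` for every `t` in the open interval `(a,b)` (with `θ` continuous), then the rotation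
angle varies along `[a,b]` by at most `π`: `|θ(b) − θ(a)| ≤ π`. -/
theorem angle_variation_le_pi (x₂ x₃ : ℝ) (h : (x₂, x₃) ≠ (0, 0))
    (a b : ℝ) (hab : a < b) (θ : ℝ → ℝ) (hθ : Continuous θ)
    (hpos : ∀ t ∈ Set.Ioo a b, 0 < x₂ * Real.cos (θ t) - x₃ * Real.sin (θ t)) :
    |θ b - θ a| ≤ π := by
  set z : ℂ := x₂ + x₃ * Complex.I with hz_def
  have hre : z.re = x₂ := by simp [hz_def]
  have him : z.im = x₃ := by simp [hz_def]
  have hz : z ≠ 0 := by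
    intro hzero
    apply h
    have h2 : x₂ = 0 := by rw [← hre, hzero]; simp
    have h3 : x₃ = 0 := by rw [← him, hzero]; simp
    simp [h2, h3]
  have hr : 0 < ‖z‖ := norm_pos_iff.mpr hz
  have hcos : Real.cos (Complex.arg z) = x₂ / ‖z‖ := by
    rw [Complex.cos_arg hz, hre]
  have hsin : Real.sin (Complex.arg z) = x₃ / ‖z‖ := by
    rw [Complex.sin_arg, him]
  set φ := Complex.arg z with hφ_def
  have hcore : ∀ t ∈ Set.Ioo a b, 0 < Real.cos (θ t + φ) := by
    intro t ht
    have h1 := hpos t ht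
    have heq : Real.cos (θ t + φ) =
        (x₂ * Real.cos (θ t) - x₃ * Real.sin (θ t)) / ‖z‖ := by
      rw [Real.cos_add, hcos, hsin]
      field_simp
    rw [heq]
    exact div_pos h1 hr
  have := angle_core (fun t => θ t + φ) (hθ.add continuous_const) a b hab hcore
  simpa using this
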